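/- Consequently, the quotient of S² × S¹ × [0,1] by the relation identifying (x, z, ε) ∼ (x, z', ε) for ε ∈ {0,1}, all x ∈ S², and all z, z' ∈ S¹ is homeomorphic to S² × S². -/

import Mathlib

/- STATEMENT 4: The quotient of S² × S¹ × [0,1] by the relation identifying
(x, z, ε) ∼ (x, z', ε) for ε ∈ {0,1}, all x ∈ S² and all z, z' ∈ S¹
(the fiberwise unreduced suspension of the S¹ factor) is homeomorphic to S² × S². -/

/-- The n-sphere, as the unit sphere in Euclidean (n+1)-space. -/
abbrev Sph (n : ℕ) : Type := Metric.sphere (0 : EuclideanSpace ℝ (Fin (n+1))) 1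

/-- The equivalence relation on S² × S¹ × [0,1] collapsing, for each x ∈ S², each of
the circles {x} × S¹ × {0} and {x} × S¹ × {1} to a point. -/
def fibSuspSetoid : Setoid (Sph 2 × Sph 1 × unitInterval) where
  r p q := p = q ∨ (p.1 = q.1 ∧ p.2.2 = 0 ∧ q.2.2 = 0) ∨ (p.1 = q.1 ∧ p.2.2 = 1 ∧ q.2.2 = 1)
  iseqv := by
    constructor
    · intro p; left; rfl
    · rintro p q (rfl | ⟨h0, h1, h2⟩ | ⟨h0, h1, h2⟩) <;> tauto
    · rintro p q r (rfl | ⟨h0, h1, h2⟩ | ⟨h0, h1, h2⟩)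
        (h | ⟨h3, h4, h5⟩ | ⟨h3, h4, h5⟩) <;> simp_all

/-- The fiberwise unreduced suspension of the S¹ factor of S² × S¹. -/
def FibSusp : Type := Quotient fibSuspSetoid

noncomputable instance : TopologicalSpace FibSusp := instTopologicalSpaceQuotient

open Real

noncomputable section Aux

def phi (z : Sph 1) (t : unitInterval) : EuclideanSpace ℝ (Fin 3) :=
  (EuclideanSpace.equiv (Fin 3) ℝ).symm
    ![(z : EuclideanSpace ℝ (Fin 2)) 0 * Real.sin (π * t),
      (z : EuclideanSpace ℝ (Fin 2)) 1 * Real.sin (π * t),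
      Real.cos (π * t)]

lemma phi_apply0 (z : Sph 1) (t : unitInterval) :
    phi z t 0 = (z : EuclideanSpace ℝ (Fin 2)) 0 * Real.sin (π * t) := rfl
lemma phi_apply1 (z : Sph 1) (t : unitInterval) :
    phi z t 1 = (z : EuclideanSpace ℝ (Fin 2)) 1 * Real.sin (π * t) := rfl
lemma phi_apply2 (z : Sph 1) (t : unitInterval) :
    phi z t 2 = Real.cos (π * t) := rfl

lemma sph1_sum_sq (z : Sph 1) :
    (z : EuclideanSpace ℝ (Fin 2)) 0 ^ 2 + (z : EuclideanSpace ℝ (Fin 2)) 1 ^ 2 = 1 := by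
  have h : ‖(z : EuclideanSpace ℝ (Fin 2))‖ = 1 := mem_sphere_zero_iff_norm.mp z.2
  rw [EuclideanSpace.norm_eq] at h
  have := Real.sqrt_eq_one.mp h
  simpa [Fin.sum_univ_two, Real.norm_eq_abs, sq_abs] using this

lemma sph2_sum_sq (w : Sph 2) :
    (w : EuclideanSpace ℝ (Fin 3)) 0 ^ 2 + (w : EuclideanSpace ℝ (Fin 3)) 1 ^ 2
      + (w : EuclideanSpace ℝ (Fin 3)) 2 ^ 2 = 1 := by
  have h : ‖(w : EuclideanSpace ℝ (Fin 3))‖ = 1 := mem_sphere_zero_iff_norm.mp w.2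
  rw [EuclideanSpace.norm_eq] at h
  have := Real.sqrt_eq_one.mp h
  simpa [Fin.sum_univ_three, Real.norm_eq_abs, sq_abs] using this

lemma phi_mem (z : Sph 1) (t : unitInterval) :
    phi z t ∈ Metric.sphere (0 : EuclideanSpace ℝ (Fin 3)) 1 := by
  rw [mem_sphere_zero_iff_norm, EuclideanSpace.norm_eq, Fin.sum_univ_three]
  simp only [phi_apply0, phi_apply1, phi_apply2, Real.norm_eq_abs, sq_abs]
  rw [show ((z : EuclideanSpace ℝ (Fin 2)) 0 * Real.sin (π * t)) ^ 2 +
      ((z : EuclideanSpace ℝ (Fin 2)) 1 * Real.sin (π * t)) ^ 2 + Real.cos (π * t) ^ 2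
      = ((z : EuclideanSpace ℝ (Fin 2)) 0 ^ 2 + (z : EuclideanSpace ℝ (Fin 2)) 1 ^ 2)
        * Real.sin (π * t) ^ 2 + Real.cos (π * t) ^ 2 by ring]
  rw [sph1_sum_sq, one_mul, Real.sin_sq_add_cos_sq, Real.sqrt_one]

def Fmap (p : Sph 2 × Sph 1 × unitInterval) : Sph 2 × Sph 2 :=
  (p.1, ⟨phi p.2.1 p.2.2, phi_mem _ _⟩)

lemma Fmap_continuous : Continuous Fmap := by
  refine continuous_fst.prodMk (Continuous.subtype_mk ?_ _)
  have hz : ∀ i : Fin 2, Continuous fun p : Sph 2 × Sph 1 × unitInterval =>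
      (p.2.1 : EuclideanSpace ℝ (Fin 2)) i := fun i =>
    (EuclideanSpace.proj i).continuous.comp
      (continuous_subtype_val.comp (continuous_fst.comp continuous_snd))
  have ht : Continuous fun p : Sph 2 × Sph 1 × unitInterval => (p.2.2 : ℝ) :=
    continuous_subtype_val.comp (continuous_snd.comp continuous_snd)
  have hs : Continuous fun p : Sph 2 × Sph 1 × unitInterval => Real.sin (π * p.2.2) :=
    Real.continuous_sin.comp (continuous_const.mul ht)
  have hc : Continuous fun p : Sph 2 × Sph 1 × unitInterval => Real.cos (π * p.2.2) :=
    Real.continuous_cos.comp (continuous_const.mul ht)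
  have hvec : Continuous fun p : Sph 2 × Sph 1 × unitInterval =>
      (![(p.2.1 : EuclideanSpace ℝ (Fin 2)) 0 * Real.sin (π * p.2.2),
        (p.2.1 : EuclideanSpace ℝ (Fin 2)) 1 * Real.sin (π * p.2.2),
        Real.cos (π * p.2.2)] : Fin 3 → ℝ) := by
    apply continuous_pi
    intro i
    fin_cases i <;> simp
    · exact (hz 0).mul hs
    · exact (hz 1).mul hs
    · exact hc
  exact (EuclideanSpace.equiv (Fin 3) ℝ).symm.continuous.comp hvec

lemma pit_mem (t : unitInterval) : π * (t : ℝ) ∈ Set.Icc 0 π := by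
  constructor
  · exact mul_nonneg Real.pi_pos.le t.2.1
  · nlinarith [t.2.2, Real.pi_pos]

lemma Fmap_respects : ∀ p q, fibSuspSetoid.r p q → Fmap p = Fmap q := by
  rintro p q (rfl | ⟨h0, h1, h2⟩ | ⟨h0, h1, h2⟩) <;> try rfl
  · unfold Fmap
    rw [h0]
    refine Prod.ext rfl (Subtype.ext ?_)
    refine PiLp.ext fun i => ?_
    fin_cases i <;>
      simp [phi_apply0, phi_apply1, phi_apply2, h1, h2]
  · unfold Fmap
    rw [h0]
    refine Prod.ext rfl (Subtype.ext ?_)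
    refine PiLp.ext fun i => ?_
    fin_cases i <;>
      simp [phi_apply0, phi_apply1, phi_apply2, h1, h2]

lemma Fmap_key : ∀ p q, Fmap p = Fmap q → fibSuspSetoid.r p q := by
  rintro ⟨x, z, t⟩ ⟨x', z', t'⟩ h
  obtain ⟨hx, hphi⟩ := Prod.mk.injEq .. ▸ h
  have hphi' : phi z t = phi z' t' := congrArg Subtype.val hphi
  have hc : Real.cos (π * t) = Real.cos (π * t') := by
    have : phi z t 2 = phi z' t' 2 := by rw [hphi']
    exact this
  have ht : t = t' := by
    have h := Real.injOn_cos (pit_mem t) (pit_mem t') hc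
    exact Subtype.ext (mul_left_cancel₀ Real.pi_ne_zero h)
  subst ht
  rcases eq_or_lt_of_le t.2.1 with h0 | h0
  · right; left
    refine ⟨hx, ?_, ?_⟩ <;> exact Subtype.ext h0.symm
  rcases eq_or_lt_of_le t.2.2 with h1 | h1
  · right; right
    refine ⟨hx, ?_, ?_⟩ <;> exact Subtype.ext h1
  · left
    have hsin : 0 < Real.sin (π * t) := by
      apply Real.sin_pos_of_pos_of_lt_pi
      · positivity
      · nlinarith [Real.pi_pos]
    have hz : z = z' := by
      refine Subtype.ext (PiLp.ext fun i => ?_)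
      fin_cases i
      · have : phi z t 0 = phi z' t 0 := by rw [hphi']
        rw [phi_apply0, phi_apply0] at this
        exact mul_right_cancel₀ hsin.ne' this
      · have : phi z t 1 = phi z' t 1 := by rw [hphi']
        rw [phi_apply1, phi_apply1] at this
        exact mul_right_cancel₀ hsin.ne' this
    exact Prod.ext hx (Prod.ext hz rfl)

lemma Fmap_surjective : Function.Surjective Fmap := by
  rintro ⟨x, w⟩
  set c : ℝ := (w : EuclideanSpace ℝ (Fin 3)) 2 with hc
  have hmem : Real.arccos c / π ∈ unitInterval := by
    constructor
    · exact div_nonneg (Real.arccos_nonneg c) Real.pi_pos.le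
    · rw [div_le_one Real.pi_pos]; exact Real.arccos_le_pi c
  set t : unitInterval := ⟨Real.arccos c / π, hmem⟩ with htdef
  have hπt : π * (t : ℝ) = Real.arccos c := by
    rw [htdef]; field_simp
  have hsq : (w : EuclideanSpace ℝ (Fin 3)) 0 ^ 2 + (w : EuclideanSpace ℝ (Fin 3)) 1 ^ 2
      = 1 - c ^ 2 := by
    have := sph2_sum_sq w; linarith
  have hc2 : c ^ 2 ≤ 1 := by
    nlinarith [sq_nonneg ((w : EuclideanSpace ℝ (Fin 3)) 0),
      sq_nonneg ((w : EuclideanSpace ℝ (Fin 3)) 1)]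
  set r : ℝ := Real.sqrt (1 - c ^ 2) with hr
  have hr2 : r ^ 2 = 1 - c ^ 2 := Real.sq_sqrt (by linarith)
  have hcos : Real.cos (π * (t : ℝ)) = c := by rw [hπt, Real.cos_arccos] <;> nlinarith
  have hsin : Real.sin (π * (t : ℝ)) = r := by rw [hπt, Real.sin_arccos]
  by_cases hr0 : r = 0
  · -- poles: w = (0,0,c)
    have h10 : (w : EuclideanSpace ℝ (Fin 3)) 0 = 0 ∧ (w : EuclideanSpace ℝ (Fin 3)) 1 = 0 := by
      have : (w : EuclideanSpace ℝ (Fin 3)) 0 ^ 2 + (w : EuclideanSpace ℝ (Fin 3)) 1 ^ 2 = 0 := by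
        rw [hsq, ← hr2, hr0]; ring
      have s0 := sq_nonneg ((w : EuclideanSpace ℝ (Fin 3)) 0)
      have s1 := sq_nonneg ((w : EuclideanSpace ℝ (Fin 3)) 1)
      constructor <;> nlinarith
    have hz0mem : ((EuclideanSpace.equiv (Fin 2) ℝ).symm ![1, 0] : EuclideanSpace ℝ (Fin 2))
        ∈ Metric.sphere (0 : EuclideanSpace ℝ (Fin 2)) 1 := by
      rw [mem_sphere_zero_iff_norm, EuclideanSpace.norm_eq, Fin.sum_univ_two]
      norm_num
    refine ⟨(x, ⟨_, hz0mem⟩, t), ?_⟩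
    unfold Fmap
    refine Prod.ext rfl (Subtype.ext (PiLp.ext fun i => ?_))
    fin_cases i <;>
      simp [phi_apply0, phi_apply1, phi_apply2, hsin, hcos, hr0, h10.1, h10.2, hc]
  · have hzmem : ((EuclideanSpace.equiv (Fin 2) ℝ).symm
        ![(w : EuclideanSpace ℝ (Fin 3)) 0 / r, (w : EuclideanSpace ℝ (Fin 3)) 1 / r] :
          EuclideanSpace ℝ (Fin 2))
        ∈ Metric.sphere (0 : EuclideanSpace ℝ (Fin 2)) 1 := by
      rw [mem_sphere_zero_iff_norm, EuclideanSpace.norm_eq, Fin.sum_univ_two]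
      have : ‖(w : EuclideanSpace ℝ (Fin 3)) 0 / r‖ ^ 2
          + ‖(w : EuclideanSpace ℝ (Fin 3)) 1 / r‖ ^ 2 = 1 := by
        rw [Real.norm_eq_abs, Real.norm_eq_abs, sq_abs, sq_abs, div_pow, div_pow,
          ← add_div, hr2, hsq, div_self]
        intro h; rw [← hr2] at h; exact hr0 (pow_eq_zero_iff (n := 2) (by norm_num) |>.mp h)
      rw [show ‖((EuclideanSpace.equiv (Fin 2) ℝ).symm
        ![(w : EuclideanSpace ℝ (Fin 3)) 0 / r, (w : EuclideanSpace ℝ (Fin 3)) 1 / r] :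
          EuclideanSpace ℝ (Fin 2)) 0‖ = ‖(w : EuclideanSpace ℝ (Fin 3)) 0 / r‖ from rfl,
        show ‖((EuclideanSpace.equiv (Fin 2) ℝ).symm
        ![(w : EuclideanSpace ℝ (Fin 3)) 0 / r, (w : EuclideanSpace ℝ (Fin 3)) 1 / r] :
          EuclideanSpace ℝ (Fin 2)) 1‖ = ‖(w : EuclideanSpace ℝ (Fin 3)) 1 / r‖ from rfl,
        this, Real.sqrt_one]
    refine ⟨(x, ⟨_, hzmem⟩, t), ?_⟩
    unfold Fmap
    refine Prod.ext rfl (Subtype.ext (PiLp.ext fun i => ?_))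
    fin_cases i <;>
      simp [phi_apply0, phi_apply1, phi_apply2, hsin, hcos, div_mul_cancel₀, hr0, hc]

end Aux

noncomputable instance : CompactSpace FibSusp :=
  inferInstanceAs (CompactSpace (Quotient fibSuspSetoid))


/-- S² × (S¹ × [0,1] / ∼), collapsed fiberwise, is homeomorphic to S² × S². -/
theorem fiberwise_suspension_homeomorph_S2xS2 : Nonempty (FibSusp ≃ₜ Sph 2 × Sph 2) := by
  set f : FibSusp → Sph 2 × Sph 2 := Quotient.lift Fmap Fmap_respects with hf
  have hinj : Function.Injective f := by
    intro a b
    refine Quotient.inductionOn₂ a b fun p q h => Quotient.sound (Fmap_key p q h)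
  have hsurj : Function.Surjective f := fun y => by
    obtain ⟨p, hp⟩ := Fmap_surjective y
    exact ⟨Quotient.mk _ p, hp⟩
  have hcont : Continuous f := Fmap_continuous.quotient_lift Fmap_respects
  exact ⟨Continuous.homeoOfEquivCompactToT2
    (f := Equiv.ofBijective f ⟨hinj, hsurj⟩) hcont⟩
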